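/- For nonzero real numbers k and c, the unit normal n = ((p_{k,c})_x × (p_{k,c})_y)/‖(p_{k,c})_x × (p_{k,c})_y‖ of the surface p_{k,c}(x,y) = (x, y, c e^{kx} cos ky) is given for all (x,y) ∈ ℝ² by n(x,y) = (1/√(1 + c² k² e^{2kx})) · ( −c k e^{kx} cos ky, c k e^{kx} sin ky, 1 ). -/

import Mathlib

noncomputable section

/-- Cross product on ℝ³ represented as `ℝ × ℝ × ℝ`. -/
def cross3 (u v : ℝ × ℝ × ℝ) : ℝ × ℝ × ℝ :=
  (u.2.1 * v.2.2 - u.2.2 * v.2.1,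
   u.2.2 * v.1 - u.1 * v.2.2,
   u.1 * v.2.1 - u.2.1 * v.1)

/-- Dot product on ℝ³. -/
def dot3 (u v : ℝ × ℝ × ℝ) : ℝ :=
  u.1 * v.1 + u.2.1 * v.2.1 + u.2.2 * v.2.2

/-- Euclidean norm on ℝ³. -/
def norm3 (u : ℝ × ℝ × ℝ) : ℝ := Real.sqrt (dot3 u u)

/-- For nonzero `k, c`, the unit normal of `p_{k,c}(x,y) = (x, y, c e^{kx} cos ky)` is
`n = (1/√(1 + c² k² e^{2kx})) (−c k e^{kx} cos ky, c k e^{kx} sin ky, 1)`. -/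
theorem stmt_12 (k c : ℝ) (hk : k ≠ 0) (hc : c ≠ 0) :
    ∀ x y : ℝ,
      let p : ℝ → ℝ → ℝ × ℝ × ℝ :=
        fun s t => (s, t, c * Real.exp (k * s) * Real.cos (k * t))
      let px := deriv (fun s => p s y) x
      let py := deriv (fun t => p x t) y
      (norm3 (cross3 px py))⁻¹ • cross3 px py =
        (1 / Real.sqrt (1 + c ^ 2 * k ^ 2 * Real.exp (2 * k * x))) •
          ((-(c * k * Real.exp (k * x) * Real.cos (k * y)),
            c * k * Real.exp (k * x) * Real.sin (k * y), 1) : ℝ × ℝ × ℝ) := by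
  intro x y p px py
  set A : ℝ := c * k * Real.exp (k * x) * Real.cos (k * y) with hA
  set B : ℝ := c * k * Real.exp (k * x) * Real.sin (k * y) with hB
  have hpx : px = (1, 0, A) := by
    have h3 : HasDerivAt (fun s => c * Real.exp (k * s) * Real.cos (k * y))
        (c * (Real.exp (k * x) * (k * 1)) * Real.cos (k * y)) x :=
      ((((hasDerivAt_id x).const_mul k).exp).const_mul c).mul_const _
    have h3' : HasDerivAt (fun s => c * Real.exp (k * s) * Real.cos (k * y)) A x := by
      convert h3 using 1; rw [hA]; ring
    have h : HasDerivAt (fun s => p s y) ((1 : ℝ), (0 : ℝ), A) x :=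
      HasDerivAt.prodMk (hasDerivAt_id x) (HasDerivAt.prodMk (hasDerivAt_const x y) h3')
    exact h.deriv
  have hpy : py = (0, 1, -B) := by
    have h3 : HasDerivAt (fun t => c * Real.exp (k * x) * Real.cos (k * t))
        (c * Real.exp (k * x) * (-Real.sin (k * x * 0 + k * y) * (k * 1))) y := by
      have := (((hasDerivAt_id y).const_mul k).cos).const_mul (c * Real.exp (k * x))
      simpa using this
    have h3' : HasDerivAt (fun t => c * Real.exp (k * x) * Real.cos (k * t)) (-B) y := by
      convert h3 using 1; rw [hB]; ring_nf
    have h : HasDerivAt (fun t => p x t) ((0 : ℝ), (1 : ℝ), -B) y :=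
      HasDerivAt.prodMk (hasDerivAt_const y x) (HasDerivAt.prodMk (hasDerivAt_id y) h3')
    exact h.deriv
  have hcross : cross3 px py = (-A, B, 1) := by
    rw [hpx, hpy]; simp [cross3]
  have hsq : A ^ 2 + B ^ 2 = c ^ 2 * k ^ 2 * Real.exp (2 * k * x) := by
    have he : Real.exp (2 * k * x) = Real.exp (k * x) * Real.exp (k * x) := by
      rw [← Real.exp_add]; ring_nf
    have ht := Real.sin_sq_add_cos_sq (k * y)
    rw [hA, hB, he]; nlinarith [ht]
  have hnorm : norm3 (-A, B, 1) = Real.sqrt (1 + c ^ 2 * k ^ 2 * Real.exp (2 * k * x)) := by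
    unfold norm3
    congr 1
    have : dot3 (-A, B, 1) (-A, B, 1) = A ^ 2 + B ^ 2 + 1 := by simp [dot3]; ring
    rw [this, hsq]; ring
  rw [hcross, hnorm, one_div]
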